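/- Let D=(V,E) be a countable directed graph in which every vertex v has finite degree, i.e., there are only finitely many u with (v,u) ∈ E or (u,v) ∈ E. Then there exists a bijection φ: V → ℕ such that D contains no infinite increasing directed path with respect to φ. -/

import Mathlib

lemma rank_aux {α β : Type*} [LinearOrder β] [WellFoundedLT β] [Infinite α]
    (K : α → β) (hinj : Function.Injective K)
    (hfin : ∀ a, {b | K b < K a}.Finite) :
    ∃ φ : α → ℕ, Function.Bijective φ ∧ ∀ a b, K a < K b ↔ φ a < φ b := by
  classical
  set φ : α → ℕ := fun a => (hfin a).toFinset.card with hφ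
  have hmono : ∀ a b, K a < K b → φ a < φ b := by
    intro a b hab
    refine Finset.card_lt_card ?_
    rw [Finset.ssubset_iff_of_subset]
    · exact ⟨a, by simp [Set.Finite.mem_toFinset, hab], by simp [Set.Finite.mem_toFinset]⟩
    · intro x hx
      simp only [Set.Finite.mem_toFinset, Set.mem_setOf_eq] at hx ⊢
      exact hx.trans hab
  have hiff : ∀ a b, K a < K b ↔ φ a < φ b := by
    intro a b
    refine ⟨hmono a b, fun h => ?_⟩
    rcases lt_trichotomy (K a) (K b) with h' | h' | h'
    · exact h'
    · exact absurd (hinj h') (by rintro rfl; exact lt_irrefl _ h)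
    · exact absurd (hmono _ _ h') (by omega)
  refine ⟨φ, ⟨?_, ?_⟩, hiff⟩
  · intro a b hab
    by_contra hne
    rcases (hinj.ne hne).lt_or_gt with h | h
    · exact absurd (hmono _ _ h) (by omega)
    · exact absurd (hmono _ _ h) (by omega)
  · intro n
    induction n with
    | zero =>
      obtain ⟨c⟩ : Nonempty α := inferInstance
      obtain ⟨a, haT, hamin⟩ := Finset.exists_min_image (insert c (hfin c).toFinset) K ⟨c, by simp⟩
      refine ⟨a, Finset.card_eq_zero.2 ?_⟩
      rw [Finset.eq_empty_iff_forall_notMem]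
      intro x hx
      rw [Set.Finite.mem_toFinset] at hx
      have hac : K a ≤ K c := hamin c (by simp)
      have hxT : x ∈ insert c (hfin c).toFinset := by
        simp only [Finset.mem_insert, Set.Finite.mem_toFinset, Set.mem_setOf_eq]
        exact Or.inr (lt_of_lt_of_le hx hac)
      exact absurd (hamin x hxT) (not_le.2 hx)
    | succ n ih =>
      obtain ⟨a, ha⟩ := ih
      have hBne : {x | K a < K x}.Nonempty := by
        by_contra hB
        rw [Set.not_nonempty_iff_eq_empty] at hB
        have : (Set.univ : Set α) ⊆ insert a {b | K b < K a} := by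
          intro x _
          rcases lt_trichotomy (K a) (K x) with h | h | h
          · exact absurd (Set.mem_setOf_eq ▸ h : x ∈ {x | K a < K x}) (by rw [hB]; simp)
          · exact Set.mem_insert_iff.2 (Or.inl (hinj h.symm))
          · exact Set.mem_insert_iff.2 (Or.inr h)
        exact Set.infinite_univ (Set.Finite.subset ((hfin a).insert a) this)
      have hwf : WellFounded (fun x y : α => K x < K y) :=
        InvImage.wf K (IsWellFounded.wf)
      set b := hwf.min _ hBne with hbdef
      have hbB : K a < K b := hwf.min_mem _ hBne
      have hbmin : ∀ x, K a < K x → ¬ K x < K b := fun x hx => hwf.not_lt_min _ hx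
      have hset : (hfin b).toFinset = insert a (hfin a).toFinset := by
        ext x
        simp only [Finset.mem_insert, Set.Finite.mem_toFinset, Set.mem_setOf_eq]
        constructor
        · intro hx
          rcases lt_trichotomy (K a) (K x) with h | h | h
          · exact absurd hx (hbmin x h)
          · exact Or.inl (hinj h.symm)
          · exact Or.inr h
        · rintro (rfl | h)
          · exact hbB
          · exact h.trans hbB
      refine ⟨b, ?_⟩
      show (hfin b).toFinset.card = n + 1
      rw [hset, Finset.card_insert_of_notMem (by simp [Set.Finite.mem_toFinset])]
      exact congrArg (· + 1) ha

theorem stmt19 {V : Type*} [Countable V] [Infinite V] (E : Set (V × V))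
    (hdeg : ∀ v : V, {u | (v, u) ∈ E ∨ (u, v) ∈ E}.Finite) :
    ∃ φ : V ≃ ℕ,
      ¬ ∃ w : ℕ → V, Function.Injective w ∧
        ∀ i, (w i, w (i + 1)) ∈ E ∧ φ (w i) < φ (w (i + 1)) := by
  classical
  obtain ⟨e⟩ : Nonempty (V ≃ ℕ) := by
    have := Encodable.ofCountable V
    have := Denumerable.ofEncodableOfInfinite V
    exact ⟨Denumerable.eqv V⟩
  set N : V → Finset V := fun v => (hdeg v).toFinset with hN
  have hmemN : ∀ u v : V, ((v, u) ∈ E ∨ (u, v) ∈ E) → u ∈ N v := by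
    intro u v h
    simpa [hN, Set.Finite.mem_toFinset] using h
  set S : ℕ → Finset V :=
    fun k => Nat.rec ∅ (fun n Sn => Sn ∪ Sn.biUnion N ∪ {e.symm n}) k with hS
  have hSsucc : ∀ k, S (k + 1) = S k ∪ (S k).biUnion N ∪ {e.symm k} := fun k => rfl
  have hstep : ∀ k, S k ≤ S (k + 1) := by
    intro k
    rw [hSsucc]
    intro x hx
    simp [Finset.mem_union, hx]
  have hmono : Monotone S := monotone_nat_of_le_succ hstep
  have hexists : ∀ v, ∃ k, v ∈ S k := by
    intro v
    refine ⟨e v + 1, ?_⟩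
    rw [hSsucc]
    simp
  set m : V → ℕ := fun v => Nat.find (hexists v) with hm
  have hmem : ∀ v, v ∈ S (m v) := fun v => Nat.find_spec (hexists v)
  have hmpos : ∀ v, 1 ≤ m v := by
    intro v
    rcases Nat.eq_zero_or_pos (m v) with h | h
    · have := hmem v
      rw [h] at this
      exact absurd this (by simp [hS])
    · exact h
  have hedge : ∀ u v : V, ((u, v) ∈ E ∨ (v, u) ∈ E) → m v ≤ m u + 1 := by
    intro u v huv
    have hvN : v ∈ N u := hmemN v u huv
    have : v ∈ S (m u + 1) := by
      rw [hSsucc]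
      refine Finset.mem_union_left _ (Finset.mem_union_right _ ?_)
      exact Finset.mem_biUnion.2 ⟨u, hmem u, hvN⟩
    exact Nat.find_min' (hexists v) this
  set K : V → ℕ ×ₗ ℕ ×ₗ ℕ := fun v => toLex ((m v - 1) / 2, toLex (m v % 2, e v)) with hK
  have hKinj : Function.Injective K := by
    intro u v huv
    have h1 : ((m u - 1) / 2, toLex ((m u) % 2, e u))
        = ((m v - 1) / 2, toLex ((m v) % 2, e v)) := congrArg ofLex huv
    have h2 := congrArg Prod.snd h1
    have h3 := congrArg (fun p => (ofLex p).2) h2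
    exact e.injective h3
  have hKfin : ∀ v, {w | K w < K v}.Finite := by
    intro v
    apply Set.Finite.subset (S (2 * ((m v - 1) / 2) + 2)).finite_toSet
    intro x hx
    simp only [Set.mem_setOf_eq, hK] at hx
    rw [Prod.Lex.lt_iff] at hx
    have hle : (m x - 1) / 2 ≤ (m v - 1) / 2 := by
      rcases hx with h | ⟨h, _⟩
      · exact le_of_lt h
      · exact le_of_eq h
    have hxle : m x ≤ 2 * ((m v - 1) / 2) + 2 := by
      have := hmpos x
      omega
    exact Finset.mem_coe.2 (hmono hxle (hmem x))
  obtain ⟨f, hbij, hiff⟩ := rank_aux K hKinj hKfin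
  refine ⟨Equiv.ofBijective f hbij, ?_⟩
  rintro ⟨w, hwinj, hw⟩
  have hK1 : ∀ j, K (w j) < K (w (j + 1)) := fun j => (hiff _ _).2 (hw j).2
  have hmle : ∀ j, m (w (j + 1)) ≤ m (w j) + 1 := fun j => hedge _ _ (Or.inl (hw j).1)
  have hub : ∀ M, ∃ j, M ≤ m (w j) := by
    intro M
    by_contra h
    push_neg at h
    have hsub : Set.range w ⊆ ↑(S M) := by
      rintro x ⟨j, rfl⟩
      exact Finset.mem_coe.2 (hmono (le_of_lt (h j)) (hmem (w j)))
    exact Set.infinite_range_of_injective hwinj ((S M).finite_toSet.subset hsub)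
  set i := m (w 0) with hi
  have hex2 : ∃ j, 2 * i + 2 ≤ m (w j) := hub _
  have hj0 : 2 * i + 2 ≤ m (w (Nat.find hex2)) := Nat.find_spec hex2
  have hj0pos : Nat.find hex2 ≠ 0 := by
    intro h
    rw [h] at hj0
    omega
  obtain ⟨jp, hjp⟩ : ∃ jp, Nat.find hex2 = jp + 1 := ⟨Nat.find hex2 - 1, by omega⟩
  rw [hjp] at hj0
  have hjplt : ¬ (2 * i + 2 ≤ m (w jp)) := Nat.find_min hex2 (by omega)
  have h1 : m (w jp) = 2 * i + 1 := by
    have := hmle jp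
    omega
  have h2 : m (w (jp + 1)) = 2 * i + 2 := by
    have := hmle jp
    omega
  have hlt : K (w (jp + 1)) < K (w jp) := by
    simp only [hK]
    rw [Prod.Lex.lt_iff]
    refine Or.inr ⟨by rw [h1, h2]; show (2*i+2-1)/2 = (2*i+1-1)/2; omega, ?_⟩
    show toLex (m (w (jp + 1)) % 2, e (w (jp + 1))) < toLex (m (w jp) % 2, e (w jp))
    rw [Prod.Lex.lt_iff]
    exact Or.inl (by rw [h1, h2]; show (2*i+2)%2 < (2*i+1)%2; omega)
  exact absurd hlt (lt_asymm (hK1 jp))
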